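/- Let F be a (k,d)-CSP in which every variable occurs in at most d^k/(e·k) constraints. Then F is satisfiable. -/

import Mathlib

open Classical in
/-- assignments on `V0` satisfying every constraint in `S`. -/
noncomputable def csat {V : Type*} [DecidableEq V] (d : ℕ) (V0 : Finset V)
    (S : Finset (Finset (V × Fin d))) : Finset ({v // v ∈ V0} → Fin d) :=
  Finset.univ.filter (fun β => ∀ B ∈ S, ∃ p ∈ B, ∃ h : p.1 ∈ V0, β ⟨p.1, h⟩ ≠ p.2)

open Classical in
/-- assignments satisfying every constraint in `S` but violating `C`. -/
noncomputable def cviol {V : Type*} [DecidableEq V] (d : ℕ) (V0 : Finset V)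
    (S : Finset (Finset (V × Fin d))) (C : Finset (V × Fin d)) : Finset ({v // v ∈ V0} → Fin d) :=
  (csat d V0 S).filter (fun β => ¬ ∃ p ∈ C, ∃ h : p.1 ∈ V0, β ⟨p.1, h⟩ ≠ p.2)

lemma mem_csat {V : Type*} [DecidableEq V] {d : ℕ} {V0 : Finset V}
    {S : Finset (Finset (V × Fin d))} {β : {v // v ∈ V0} → Fin d} :
    β ∈ csat d V0 S ↔ ∀ B ∈ S, ∃ p ∈ B, ∃ h : p.1 ∈ V0, β ⟨p.1, h⟩ ≠ p.2 := by
  simp [csat]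

lemma mem_cviol {V : Type*} [DecidableEq V] {d : ℕ} {V0 : Finset V}
    {S : Finset (Finset (V × Fin d))} {C : Finset (V × Fin d)} {β : {v // v ∈ V0} → Fin d} :
    β ∈ cviol d V0 S C ↔ (β ∈ csat d V0 S ∧ ¬ ∃ p ∈ C, ∃ h : p.1 ∈ V0, β ⟨p.1, h⟩ ≠ p.2) := by
  simp [cviol]

lemma csat_insert_card {V : Type*} [DecidableEq V] (d : ℕ) (V0 : Finset V)
    (S : Finset (Finset (V × Fin d))) (C : Finset (V × Fin d)) :
    (csat d V0 (insert C S)).card + (cviol d V0 S C).card = (csat d V0 S).card := by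
  classical
  have h1 : csat d V0 (insert C S)
      = (csat d V0 S).filter (fun β => ∃ p ∈ C, ∃ h : p.1 ∈ V0, β ⟨p.1, h⟩ ≠ p.2) := by
    ext β
    simp only [mem_csat, Finset.mem_filter, Finset.forall_mem_insert, mem_csat]
    tauto
  have h2 : cviol d V0 S C
      = (csat d V0 S).filter (fun β => ¬ ∃ p ∈ C, ∃ h : p.1 ∈ V0, β ⟨p.1, h⟩ ≠ p.2) := rfl
  rw [h1, h2]
  exact Finset.card_filter_add_card_filter_not _

lemma cviol_mono {V : Type*} [DecidableEq V] (d : ℕ) (V0 : Finset V)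
    {S2 S : Finset (Finset (V × Fin d))} (hsub : S2 ⊆ S) (C : Finset (V × Fin d)) :
    (cviol d V0 S C).card ≤ (cviol d V0 S2 C).card := by
  apply Finset.card_le_card
  intro β hβ
  rw [mem_cviol] at hβ ⊢
  exact ⟨mem_csat.mpr (fun B hB => mem_csat.mp hβ.1 B (hsub hB)), hβ.2⟩

lemma count_key {V : Type*} [DecidableEq V] (d k : ℕ) (hd : 0 < d) (V0 : Finset V)
    (S : Finset (Finset (V × Fin d))) (C : Finset (V × Fin d))
    (hCV0 : ∀ p ∈ C, p.1 ∈ V0)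
    (hCk : C.card = k) (hWk : (C.image Prod.fst).card = k)
    (hdisj : ∀ B ∈ S, Disjoint (B.image Prod.fst) (C.image Prod.fst)) :
    (csat d V0 S).card = (cviol d V0 S C).card * d ^ k := by
  classical
  set W : Finset V := C.image Prod.fst with hW
  have hinj : Set.InjOn Prod.fst (C : Set (V × Fin d)) :=
    Finset.injOn_of_card_image_eq (by rw [hWk, hCk])
  have hWV0 : ∀ v ∈ W, v ∈ V0 := by
    intro v hv
    obtain ⟨p, hp, rfl⟩ := Finset.mem_image.mp hv
    exact hCV0 p hp
  -- the forbidden value of each variable of C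
  have hbad : ∀ v ∈ W, ∃ b : Fin d, (v, b) ∈ C := by
    intro v hv
    obtain ⟨p, hp, rfl⟩ := Finset.mem_image.mp hv
    exact ⟨p.2, hp⟩
  let bad : V → Fin d := fun v => if h : ∃ b : Fin d, (v, b) ∈ C then h.choose else ⟨0, hd⟩
  have hbadC : ∀ p ∈ C, bad p.1 = p.2 := by
    intro p hp
    have hex : ∃ b : Fin d, (p.1, b) ∈ C := ⟨p.2, hp⟩
    have h1 : (p.1, hex.choose) ∈ C := hex.choose_spec
    have := hinj h1 hp rfl
    simp only [bad, dif_pos hex]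
    exact congrArg Prod.snd this
  -- satisfaction of a constraint only depends on its variables
  have sat_congr : ∀ (B : Finset (V × Fin d)) (β β' : {v // v ∈ V0} → Fin d),
      (∀ v : {v // v ∈ V0}, (v : V) ∈ B.image Prod.fst → β v = β' v) →
      (∃ p ∈ B, ∃ h : p.1 ∈ V0, β ⟨p.1, h⟩ ≠ p.2) → (∃ p ∈ B, ∃ h : p.1 ∈ V0, β' ⟨p.1, h⟩ ≠ p.2) := by
    intro B β β' hagree ⟨p, hp, h, hne⟩
    refine ⟨p, hp, h, ?_⟩
    rw [← hagree ⟨p.1, h⟩ (Finset.mem_image_of_mem _ hp)]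
    exact hne
  -- the bijection
  have key : (csat d V0 S).card
      = ((cviol d V0 S C) ×ˢ (Finset.univ : Finset ({v // v ∈ W} → Fin d))).card := by
    apply Finset.card_nbij'
      (i := fun (β : {v // v ∈ V0} → Fin d) =>
        ((fun v : {v // v ∈ V0} => if h : (v : V) ∈ W then bad (v : V) else β v),
         (fun w : {v // v ∈ W} => β ⟨(w : V), hWV0 (w : V) w.2⟩)))
      (j := fun (γf : ({v // v ∈ V0} → Fin d) × ({v // v ∈ W} → Fin d)) =>
        fun v : {v // v ∈ V0} => if h : (v : V) ∈ W then γf.2 ⟨(v : V), h⟩ else γf.1 v)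
    · -- i maps into the product
      intro β hβ
      rw [Finset.mem_coe] at hβ
      rw [Finset.mem_coe, Finset.mem_product]
      constructor
      · rw [mem_cviol]
        constructor
        · rw [mem_csat] at hβ ⊢
          intro B hB
          refine sat_congr B β _ ?_ (hβ B hB)
          intro v hv
          have : (v : V) ∉ W := Finset.disjoint_left.mp (hdisj B hB) hv
          simp [this]
        · rintro ⟨p, hp, h, hne⟩
          apply hne
          have hpW : p.1 ∈ W := Finset.mem_image_of_mem _ hp
          simp only [dif_pos hpW]
          exact hbadC p hp
      · exact Finset.mem_univ _
    · -- j maps back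
      intro γf hγf
      rw [Finset.mem_coe, Finset.mem_product] at hγf
      obtain ⟨hγ, -⟩ := hγf
      rw [mem_cviol] at hγ
      rw [Finset.mem_coe]
      rw [mem_csat] at hγ ⊢
      intro B hB
      refine sat_congr B γf.1
        (fun v => if h : (v : V) ∈ W then γf.2 ⟨(v : V), h⟩ else γf.1 v) ?_ (hγ.1 B hB)
      intro v hv
      have : (v : V) ∉ W := Finset.disjoint_left.mp (hdisj B hB) hv
      simp [this]
    · -- left inverse
      intro β hβ
      funext v
      by_cases h : (v : V) ∈ W
      · simp only [dif_pos h]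
      · simp only [dif_neg h]
    · -- right inverse
      intro γf hγf
      rw [Finset.mem_coe, Finset.mem_product] at hγf
      obtain ⟨hγ, -⟩ := hγf
      rw [mem_cviol] at hγ
      have hviol : ∀ p ∈ C, ∀ h : p.1 ∈ V0, γf.1 ⟨p.1, h⟩ = p.2 := by
        have := hγ.2
        push_neg at this
        exact this
      ext v
      · -- first component
        by_cases h : (v : V) ∈ W
        · simp only [dif_pos h]
          obtain ⟨p, hp, hpv⟩ := Finset.mem_image.mp h
          have h1 : bad (v : V) = p.2 := by rw [← hpv]; exact hbadC p hp
          have h2 : γf.1 v = p.2 := by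
            have := hviol p hp (by rw [hpv]; exact v.2)
            convert this using 2
            apply Subtype.ext; exact hpv.symm
          rw [h1, h2]
        · simp only [dif_neg h]
      · -- second component
        simp only []
        have hw : ((v : V) : V) ∈ W := v.2
        simp [dif_pos hw]
  rw [key, Finset.card_product]
  congr 1
  rw [Finset.card_univ, Fintype.card_fun, Fintype.card_coe, Fintype.card_fin, hWk]

lemma analytic (x : ℝ) (hx0 : 0 < x) (hx1 : x < 1) (m : ℕ) (hm : (m : ℝ) ≤ 1 / x - 1) :
    Real.exp (-1) ≤ (1 - x) ^ m := by
  have h1x : (0:ℝ) < 1 - x := by linarith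
  set u : ℝ := x / (1 - x) with hu
  have hu0 : 0 < u := by positivity
  have hstep : Real.exp (-u) ≤ 1 - x := by
    have h2 : 1 / (1 - x) ≤ Real.exp u := by
      have := Real.add_one_le_exp u
      have h3 : u + 1 = 1 / (1 - x) := by rw [hu]; field_simp; ring
      linarith
    have h4 : (Real.exp u)⁻¹ ≤ (1 / (1 - x))⁻¹ :=
      inv_anti₀ (by positivity) h2
    rw [Real.exp_neg]
    calc (Real.exp u)⁻¹ ≤ (1 / (1 - x))⁻¹ := h4
      _ = 1 - x := by field_simp
  have hmu : (m : ℝ) * u ≤ 1 := by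
    have hmx : (m : ℝ) * x ≤ 1 - x := by
      have := mul_le_mul_of_nonneg_right hm (le_of_lt hx0)
      have h5 : (1 / x - 1) * x = 1 - x := by field_simp
      linarith
    rw [hu, ← mul_div_assoc, div_le_one h1x]
    linarith
  calc Real.exp (-1) ≤ Real.exp (-((m : ℝ) * u)) := by
        apply Real.exp_le_exp.mpr; linarith
    _ = Real.exp (-u) ^ m := by
        rw [← Real.exp_nat_mul]; ring_nf
    _ ≤ (1 - x) ^ m := pow_le_pow_left₀ (le_of_lt (Real.exp_pos _)) hstep m

lemma main_ind {V : Type*} [DecidableEq V] (k d : ℕ) (hk : 1 ≤ k) (hd : 2 ≤ d)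
    (F : Finset (Finset (V × Fin d))) (V0 : Finset V)
    (hV0 : ∀ C ∈ F, ∀ p ∈ C, p.1 ∈ V0)
    (hcard : ∀ C ∈ F, C.card = k ∧ (C.image Prod.fst).card = k)
    (x : ℝ) (hx0 : 0 < x) (hx1 : x < 1)
    (hD : ∀ C ∈ F, ((F.filter
        (fun B => ¬ Disjoint (B.image Prod.fst) (C.image Prod.fst))).card : ℝ) ≤ 1 / x)
    (hpx : ∀ m : ℕ, (m : ℝ) ≤ 1 / x - 1 → (1:ℝ) / (d:ℝ) ^ k ≤ x * (1 - x) ^ m) :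
    ∀ n : ℕ, ∀ S ⊆ F, S.card = n →
      0 < (csat d V0 S).card ∧
      ∀ C ∈ F, C ∉ S → ((cviol d V0 S C).card : ℝ) ≤ x * ((csat d V0 S).card : ℝ) := by
  classical
  intro n
  induction n using Nat.strong_induction_on with
  | _ n IH =>
  intro S hSF hScard
  constructor
  · -- positivity of the count of satisfying assignments
    rcases Finset.eq_empty_or_nonempty S with rfl | ⟨C, hC⟩
    · have hne : Nonempty ({v // v ∈ V0} → Fin d) := ⟨fun _ => ⟨0, by omega⟩⟩
      have he : csat d V0 ∅ = Finset.univ := by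
        ext β; simp [mem_csat]
      rw [he, Finset.card_univ]
      exact Fintype.card_pos
    · set S' := S.erase C with hS'
      have hCF : C ∈ F := hSF hC
      have hCS' : C ∉ S' := Finset.notMem_erase _ _
      have hcard' : S'.card = n - 1 := by rw [hS', Finset.card_erase_of_mem hC, hScard]
      have hn1 : 0 < n := by rw [← hScard]; exact Finset.card_pos.mpr ⟨C, hC⟩
      have hlt : n - 1 < n := by omega
      obtain ⟨hpos', hbound'⟩ :=
        IH (n-1) hlt S' (Finset.Subset.trans (Finset.erase_subset _ _) hSF) hcard'
      have hb := hbound' C hCF hCS'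
      have hins := csat_insert_card d V0 S' C
      have hSins : insert C S' = S := Finset.insert_erase hC
      rw [hSins] at hins
      have hposR : (0:ℝ) < (csat d V0 S).card := by
        have h1 : ((csat d V0 S).card : ℝ)
            = ((csat d V0 S').card : ℝ) - ((cviol d V0 S' C).card : ℝ) := by
          have h0 : ((csat d V0 S).card : ℝ) + ((cviol d V0 S' C).card : ℝ)
              = ((csat d V0 S').card : ℝ) := by exact_mod_cast hins
          linarith
        have h2 : (0:ℝ) < ((csat d V0 S').card : ℝ) := by exact_mod_cast hpos'
        rw [h1]
        nlinarith
      exact_mod_cast hposR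
  · -- conditional bound
    intro C hCF hCS
    set W : Finset V := C.image Prod.fst with hWdef
    set S1 : Finset (Finset (V × Fin d)) :=
      S.filter (fun B => ¬ Disjoint (B.image Prod.fst) W) with hS1
    set S2 : Finset (Finset (V × Fin d)) :=
      S.filter (fun B => Disjoint (B.image Prod.fst) W) with hS2
    have hS12 : S2 ∪ S1 = S := Finset.filter_union_filter_not_eq _ S
    have hS2F : S2 ⊆ F := Finset.Subset.trans (Finset.filter_subset _ _) hSF
    have hS1F : S1 ⊆ F := Finset.Subset.trans (Finset.filter_subset _ _) hSF
    have hdk0 : (0:ℝ) < (d:ℝ) ^ k := by positivity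
    have hcount : (csat d V0 S2).card = (cviol d V0 S2 C).card * d ^ k :=
      count_key d k (by omega) V0 S2 C (hV0 C hCF) (hcard C hCF).1 (hcard C hCF).2
        (fun B hB => (Finset.mem_filter.mp hB).2)
    -- growth lemma: adding the neighbours one at a time
    have hgrow : ∀ T : Finset (Finset (V × Fin d)), T ⊆ S1 →
        ((1-x) ^ T.card : ℝ) * ((csat d V0 S2).card : ℝ)
          ≤ ((csat d V0 (S2 ∪ T)).card : ℝ) := by
      intro T
      induction T using Finset.induction_on with
      | empty => intro _; simp
      | @insert a T' ha IH2 =>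
        intro hsub
        have haS1 : a ∈ S1 := hsub (Finset.mem_insert_self _ _)
        have hT'S1 : T' ⊆ S1 := Finset.Subset.trans (Finset.subset_insert _ _) hsub
        have h1 := IH2 hT'S1
        have haU : a ∉ S2 ∪ T' := by
          intro hmem
          rcases Finset.mem_union.mp hmem with h | h
          · exact (Finset.mem_filter.mp haS1).2 (Finset.mem_filter.mp h).2
          · exact ha h
        have hUsub : S2 ∪ T' ⊆ S := by
          apply Finset.union_subset (Finset.filter_subset _ _)
          exact Finset.Subset.trans hT'S1 (Finset.filter_subset _ _)
        have haS : a ∈ S := (Finset.filter_subset _ _) haS1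
        have hUlt : (S2 ∪ T').card < n := by
          rw [← hScard]
          exact Finset.card_lt_card ((Finset.ssubset_iff_of_subset hUsub).mpr ⟨a, haS, haU⟩)
        obtain ⟨-, hb⟩ := IH _ hUlt (S2 ∪ T') (Finset.Subset.trans hUsub hSF) rfl
        have hIH2 := hb a (hS1F haS1) haU
        have hins := csat_insert_card d V0 (S2 ∪ T') a
        have hgeq : (1-x) * ((csat d V0 (S2 ∪ T')).card : ℝ)
            ≤ ((csat d V0 (insert a (S2 ∪ T'))).card : ℝ) := by
          have h0 : ((csat d V0 (insert a (S2 ∪ T'))).card : ℝ)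
              + ((cviol d V0 (S2 ∪ T') a).card : ℝ)
              = ((csat d V0 (S2 ∪ T')).card : ℝ) := by exact_mod_cast hins
          linarith
        calc ((1-x) ^ (insert a T').card : ℝ) * ((csat d V0 S2).card : ℝ)
            = (1-x) * (((1-x) ^ T'.card) * ((csat d V0 S2).card : ℝ)) := by
              rw [Finset.card_insert_of_notMem ha]; ring
          _ ≤ (1-x) * ((csat d V0 (S2 ∪ T')).card : ℝ) :=
              mul_le_mul_of_nonneg_left h1 (by linarith)
          _ ≤ ((csat d V0 (insert a (S2 ∪ T'))).card : ℝ) := hgeq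
          _ = ((csat d V0 (S2 ∪ insert a T')).card : ℝ) := by rw [Finset.union_insert]
    -- bound on the number of neighbours
    have hWne : W.Nonempty := by
      rw [← Finset.card_pos, (hcard C hCF).2]; omega
    have hCmem : C ∈ F.filter (fun B => ¬ Disjoint (B.image Prod.fst) W) := by
      rw [Finset.mem_filter]
      refine ⟨hCF, ?_⟩
      rw [← hWdef, disjoint_self]
      simpa using hWne.ne_empty
    have hS1sub : S1 ⊆ (F.filter (fun B => ¬ Disjoint (B.image Prod.fst) W)).erase C := by
      intro B hB
      rw [Finset.mem_erase]
      refine ⟨?_, Finset.mem_filter.mpr ⟨hSF ((Finset.filter_subset _ _) hB),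
        (Finset.mem_filter.mp hB).2⟩⟩
      rintro rfl
      exact hCS ((Finset.filter_subset _ _) hB)
    have hm : (S1.card : ℝ) ≤ 1 / x - 1 := by
      have h1 : S1.card ≤ (F.filter (fun B => ¬ Disjoint (B.image Prod.fst) W)).card - 1 := by
        calc S1.card ≤ ((F.filter (fun B => ¬ Disjoint (B.image Prod.fst) W)).erase C).card :=
              Finset.card_le_card hS1sub
          _ = _ := Finset.card_erase_of_mem hCmem
      have h2 : 1 ≤ (F.filter (fun B => ¬ Disjoint (B.image Prod.fst) W)).card :=
        Finset.card_pos.mpr ⟨C, hCmem⟩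
      have h3 := hD C hCF
      rw [← hWdef] at h3
      have h4 : (S1.card : ℝ)
          ≤ ((F.filter (fun B => ¬ Disjoint (B.image Prod.fst) W)).card : ℝ) - 1 := by
        rw [← Nat.cast_one, ← Nat.cast_sub h2]
        exact_mod_cast h1
      linarith
    have hkx := hpx S1.card hm
    have h3 := hgrow S1 (Finset.Subset.refl _)
    rw [hS12] at h3
    have h1 : ((cviol d V0 S C).card : ℝ) ≤ ((cviol d V0 S2 C).card : ℝ) := by
      exact_mod_cast cviol_mono d V0 (Finset.filter_subset _ _) C
    have h2 : ((csat d V0 S2).card : ℝ) = ((cviol d V0 S2 C).card : ℝ) * (d:ℝ) ^ k := by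
      exact_mod_cast hcount
    have hN2 : (0:ℝ) ≤ ((csat d V0 S2).card : ℝ) := by positivity
    calc ((cviol d V0 S C).card : ℝ) ≤ ((cviol d V0 S2 C).card : ℝ) := h1
      _ = (1 / (d:ℝ) ^ k) * ((csat d V0 S2).card : ℝ) := by
          rw [h2]; field_simp
      _ ≤ (x * (1-x) ^ S1.card) * ((csat d V0 S2).card : ℝ) :=
          mul_le_mul_of_nonneg_right hkx hN2
      _ = x * ((1-x) ^ S1.card * ((csat d V0 S2).card : ℝ)) := by ring
      _ ≤ x * ((csat d V0 S).card : ℝ) := mul_le_mul_of_nonneg_left h3 (le_of_lt hx0)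

/-- A (k,d)-CSP in which every variable occurs in at most d^k/(e·k) constraints
is satisfiable.  A constraint is a set of k literals `x ≠ b` (pairs (x,b)) over
k distinct variables; an assignment satisfies it if some variable avoids its
forbidden value. -/
theorem stmt4 {V : Type*} [DecidableEq V] (k d : ℕ) (hk : 1 ≤ k) (hd : 2 ≤ d)
    (F : Finset (Finset (V × Fin d)))
    (hcard : ∀ C ∈ F, C.card = k ∧ (C.image Prod.fst).card = k)
    (hdeg : ∀ x : V, ((F.filter (fun C => x ∈ C.image Prod.fst)).card : ℝ)
      ≤ (d : ℝ) ^ k / (Real.exp 1 * k)) :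
    ∃ α : V → Fin d, ∀ C ∈ F, ∃ p ∈ C, α p.1 ≠ p.2 := by
  classical
  have he1 : (2.7182818283 : ℝ) < Real.exp 1 := Real.exp_one_gt_d9
  have he2 : Real.exp 1 < 2.7182818286 := Real.exp_one_lt_d9
  have hdk2 : 2 ≤ d ^ k := le_trans hd (Nat.le_self_pow (by omega) d)
  by_cases h3 : 3 ≤ d ^ k
  case neg =>
    -- degenerate case : d^k = 2, every degree bound forces F = ∅
    have hdk : d ^ k = 2 := by omega
    have hF : F = ∅ := by
      by_contra hne
      obtain ⟨C, hC⟩ := Finset.nonempty_iff_ne_empty.mpr hne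
      have hCcard : C.card = k := (hcard C hC).1
      have hCne : C.Nonempty := Finset.card_pos.mp (by omega)
      obtain ⟨p, hp⟩ := hCne
      have hmem : C ∈ F.filter (fun B => p.1 ∈ B.image Prod.fst) :=
        Finset.mem_filter.mpr ⟨hC, Finset.mem_image_of_mem _ hp⟩
      have h1 : (1:ℝ) ≤ ((F.filter (fun B => p.1 ∈ B.image Prod.fst)).card : ℝ) := by
        have := Finset.card_pos.mpr ⟨C, hmem⟩
        exact_mod_cast this
      have h2 := hdeg p.1
      have hdkR : ((d:ℝ)) ^ k = 2 := by exact_mod_cast hdk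
      rw [hdkR] at h2
      have hek : Real.exp 1 ≤ Real.exp 1 * k := by
        nlinarith [(by exact_mod_cast hk : (1:ℝ) ≤ (k:ℝ))]
      have : (2:ℝ) / (Real.exp 1 * k) < 1 := by
        rw [div_lt_one (by nlinarith)]
        nlinarith
      linarith
    exact ⟨fun _ => ⟨0, by omega⟩, fun C hC => absurd hC (by simp [hF])⟩
  case pos =>
    set V0 : Finset V := F.biUnion (fun C => C.image Prod.fst) with hV0def
    have hV0 : ∀ C ∈ F, ∀ p ∈ C, p.1 ∈ V0 := by
      intro C hC p hp
      exact Finset.mem_biUnion.mpr ⟨C, hC, Finset.mem_image_of_mem _ hp⟩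
    have hdkR : (3:ℝ) ≤ (d:ℝ) ^ k := by exact_mod_cast h3
    set x : ℝ := Real.exp 1 / (d:ℝ) ^ k with hxdef
    have hx0 : 0 < x := by positivity
    have hx1 : x < 1 := by
      rw [hxdef, div_lt_one (by positivity)]
      linarith
    have hxinv : 1 / x = (d:ℝ) ^ k / Real.exp 1 := by
      rw [hxdef]; field_simp
    have hD : ∀ C ∈ F, ((F.filter
        (fun B => ¬ Disjoint (B.image Prod.fst) (C.image Prod.fst))).card : ℝ) ≤ 1 / x := by
      intro C hC
      set W : Finset V := C.image Prod.fst with hW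
      have hsub : F.filter (fun B => ¬ Disjoint (B.image Prod.fst) W)
          ⊆ W.biUnion (fun v => F.filter (fun B => v ∈ B.image Prod.fst)) := by
        intro B hB
        obtain ⟨hBF, hBd⟩ := Finset.mem_filter.mp hB
        obtain ⟨v, hv1, hv2⟩ := Finset.not_disjoint_iff.mp hBd
        exact Finset.mem_biUnion.mpr ⟨v, hv2, Finset.mem_filter.mpr ⟨hBF, hv1⟩⟩
      have h1 : (F.filter (fun B => ¬ Disjoint (B.image Prod.fst) W)).card
          ≤ ∑ v ∈ W, (F.filter (fun B => v ∈ B.image Prod.fst)).card :=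
        le_trans (Finset.card_le_card hsub) (Finset.card_biUnion_le)
      have h2 : ((F.filter (fun B => ¬ Disjoint (B.image Prod.fst) W)).card : ℝ)
          ≤ ∑ v ∈ W, ((F.filter (fun B => v ∈ B.image Prod.fst)).card : ℝ) := by
        push_cast
        exact_mod_cast h1
      have h3' : ∑ v ∈ W, ((F.filter (fun B => v ∈ B.image Prod.fst)).card : ℝ)
          ≤ ∑ _v ∈ W, ((d:ℝ) ^ k / (Real.exp 1 * k)) :=
        Finset.sum_le_sum (fun v _ => hdeg v)
      have h4 : ∑ _v ∈ W, ((d:ℝ) ^ k / (Real.exp 1 * k)) = (d:ℝ) ^ k / Real.exp 1 := by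
        rw [Finset.sum_const, hW, (hcard C hC).2, nsmul_eq_mul]
        have hkne : (k:ℝ) ≠ 0 := by
          have : (1:ℝ) ≤ (k:ℝ) := by exact_mod_cast hk
          linarith
        field_simp
      rw [hxinv]
      linarith
    have hpx : ∀ m : ℕ, (m : ℝ) ≤ 1 / x - 1 → (1:ℝ) / (d:ℝ) ^ k ≤ x * (1 - x) ^ m := by
      intro m hm
      have han := analytic x hx0 hx1 m hm
      have hxe : x * Real.exp (-1) = 1 / (d:ℝ) ^ k := by
        rw [hxdef, Real.exp_neg]
        have : Real.exp 1 ≠ 0 := ne_of_gt (Real.exp_pos _)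
        field_simp
      calc (1:ℝ) / (d:ℝ) ^ k = x * Real.exp (-1) := hxe.symm
        _ ≤ x * (1 - x) ^ m := mul_le_mul_of_nonneg_left han (le_of_lt hx0)
    obtain ⟨hpos, -⟩ := main_ind k d hk hd F V0 hV0 hcard x hx0 hx1 hD hpx F.card F
      (Finset.Subset.refl _) rfl
    obtain ⟨β, hβ⟩ := Finset.card_pos.mp hpos
    rw [mem_csat] at hβ
    refine ⟨fun v => if h : v ∈ V0 then β ⟨v, h⟩ else ⟨0, by omega⟩, ?_⟩
    intro C hC
    obtain ⟨p, hp, h, hne⟩ := hβ C hC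
    refine ⟨p, hp, ?_⟩
    simpa [dif_pos h] using hne
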